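/- arXiv:2112.11901 — 2 statements merged into one kernel-verified Lean document; each statement's English description precedes it below -/
import Mathlib

section
/- Persistent Schanuel's lemma (Lemma 3.1). Let ε ≥ 0, let M, N : R^n → vec be persistence modules, and let 0 → K → P → M → 0 and 0 → L → Q → N → 0 be short exact sequences of persistence modules (exact pointwise), with P and Q projective objects of the category of persistence modules. If M and N are ε-interleaved, then P ⊕ L[ε] and K[ε] ⊕ Q are ε-interleaved. -/
set_option linter.unusedVariables false
set_option maxHeartbeats 800000

open scoped Classical ENNReal

noncomputable section

/-- Points of `R^n`. The metric on `Fin n → ℝ` is the sup-metric, so `dist` is `‖·‖_∞`. -/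
abbrev Pt (n : ℕ) := Fin n → ℝ

/-- An `n`-parameter persistence module: a functor from the poset `R^n`
to finite-dimensional `k`-vector spaces. -/
structure PersMod (k : Type) [Field k] (n : ℕ) where
  X : Pt n → Type
  [acg : ∀ r, AddCommGroup (X r)]
  [mod : ∀ r, Module k (X r)]
  [fd : ∀ r, FiniteDimensional k (X r)]
  map : ∀ {r s : Pt n}, r ≤ s → (X r →ₗ[k] X s)
  map_id : ∀ r : Pt n, map (le_refl r) = LinearMap.id
  map_comp : ∀ {r s t : Pt n} (h₁ : r ≤ s) (h₂ : s ≤ t),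
    (map h₂).comp (map h₁) = map (h₁.trans h₂)

attribute [instance] PersMod.acg PersMod.mod PersMod.fd

variable {k : Type} [Field k] {n : ℕ}

/-- A morphism of persistence modules: a natural transformation. -/
structure PersHom (M N : PersMod k n) where
  app : ∀ r, M.X r →ₗ[k] N.X r
  natural : ∀ {r s : Pt n} (h : r ≤ s),
    (N.map h).comp (app r) = (app s).comp (M.map h)

def shiftPt (ε : ℝ) (r : Pt n) : Pt n := fun i => r i + ε

lemma shiftPt_mono {ε : ℝ} {r s : Pt n} (h : r ≤ s) : shiftPt ε r ≤ shiftPt ε s :=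
  fun i => add_le_add (h i) le_rfl

lemma le_shiftPt {ε : ℝ} (hε : 0 ≤ ε) (r : Pt n) : r ≤ shiftPt ε r :=
  fun i => le_add_of_nonneg_right hε

/-- The `ε`-shift of a persistence module. -/
def PersMod.shift (M : PersMod k n) (ε : ℝ) : PersMod k n where
  X r := M.X (shiftPt ε r)
  map h := M.map (shiftPt_mono h)
  map_id r := M.map_id _
  map_comp h₁ h₂ := M.map_comp _ _

/-- `M` and `N` are `ε`-interleaved. -/
def Interleaved (ε : ℝ) (M N : PersMod k n) : Prop :=
  ∃ hε : 0 ≤ ε,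
  ∃ (f : PersHom M (N.shift ε)) (g : PersHom N (M.shift ε)),
    (∀ r : Pt n, (g.app (shiftPt ε r)).comp (f.app r)
        = M.map ((le_shiftPt hε r).trans (le_shiftPt hε _))) ∧
    (∀ r : Pt n, (f.app (shiftPt ε r)).comp (g.app r)
        = N.map ((le_shiftPt hε r).trans (le_shiftPt hε _)))

/-- The interleaving distance. -/
def interleavingDist (M N : PersMod k n) : ℝ≥0∞ :=
  sInf { e : ℝ≥0∞ | ∃ ε : ℝ, e = ENNReal.ofReal ε ∧ Interleaved ε M N }

/-- The free persistence module `⊕_i F_{L i}`, where `F_j` is the "upset" interval module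
generated at `j`. -/
def freeModFin {m : ℕ} (L : Fin m → Pt n) : PersMod k n where
  X r := {i : Fin m // L i ≤ r} → k
  map {r s} h :=
    { toFun := fun f i => if h' : L i.1 ≤ r then f ⟨i.1, h'⟩ else 0
      map_add' := by
        intro f g; funext i
        by_cases h' : L i.1 ≤ r <;> simp [h']
      map_smul' := by
        intro c f; funext i
        by_cases h' : L i.1 ≤ r <;> simp [h'] }
  map_id r := by
    apply LinearMap.ext; intro f; funext i
    show (if h' : L i.1 ≤ r then f ⟨i.1, h'⟩ else 0) = f i
    rw [dif_pos i.2]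
  map_comp {r s t} h₁ h₂ := by
    apply LinearMap.ext; intro f; funext i
    show (if hs : L i.1 ≤ s then
            (if hr : L i.1 ≤ r then f ⟨i.1, hr⟩ else 0) else 0)
        = (if hr : L i.1 ≤ r then f ⟨i.1, hr⟩ else 0)
    by_cases hr : L i.1 ≤ r
    · simp [hr, hr.trans h₁]
    · simp [hr]

/-- Isomorphism of persistence modules. -/
def PersIso (M N : PersMod k n) : Prop :=
  ∃ (f : PersHom M N) (g : PersHom N M),
    (∀ r, (g.app r).comp (f.app r) = LinearMap.id) ∧
    (∀ r, (f.app r).comp (g.app r) = LinearMap.id)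

/-- `P` is free of finite rank with barcode `B`. -/
def IsFreeWith (P : PersMod k n) (B : Multiset (Pt n)) : Prop :=
  ∃ (m : ℕ) (L : Fin m → Pt n), B = (List.ofFn L : Multiset (Pt n)) ∧ PersIso P (freeModFin L)

/-- `M` is finitely presentable: it is (isomorphic to) the cokernel of a morphism
between free modules of finite rank. -/
def FinitelyPresentable (M : PersMod k n) : Prop :=
  ∃ (c r : ℕ) (Lc : Fin c → Pt n) (Lr : Fin r → Pt n)
    (f : PersHom (freeModFin Lc) (freeModFin Lr)) (g : PersHom (freeModFin Lr) M),
    (∀ x, Function.Surjective (g.app x)) ∧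
    (∀ x, LinearMap.range (f.app x) = LinearMap.ker (g.app x))

/-- A resolution of `M` of length `len`:
an exact sequence `0 → P_len → ⋯ → P_0 → M → 0` (encoded with `P j = 0` for `j > len`). -/
structure Res (M : PersMod k n) where
  len : ℕ
  P : ℕ → PersMod k n
  d : ∀ j : ℕ, PersHom (P (j + 1)) (P j)
  aug : PersHom (P 0) M
  aug_surj : ∀ r, Function.Surjective (aug.app r)
  exact_zero : ∀ r, LinearMap.range ((d 0).app r) = LinearMap.ker (aug.app r)
  exact_succ : ∀ (j : ℕ) (r), LinearMap.range ((d (j + 1)).app r) = LinearMap.ker ((d j).app r)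
  vanish : ∀ j, len < j → ∀ r, ∀ x : (P j).X r, x = 0

/-- Projectivity in the category of persistence modules
(where epimorphisms are the pointwise surjections). -/
def IsProjectiveMod (P : PersMod k n) : Prop :=
  ∀ (A B : PersMod k n) (e : PersHom A B), (∀ r, Function.Surjective (e.app r)) →
    ∀ f : PersHom P B, ∃ g : PersHom P A, ∀ r, (e.app r).comp (g.app r) = f.app r

/-- An `ε`-bijection between two multisets of points of `R^n`. -/
def IsMatching (ε : ℝ) (B C : Multiset (Pt n)) : Prop :=
  ∃ m : Multiset (Pt n × Pt n),
    m.map Prod.fst = B ∧ m.map Prod.snd = C ∧ ∀ p ∈ m, dist p.1 p.2 ≤ ε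

/-- The bottleneck distance between barcodes. -/
def bottleneckDist (B C : Multiset (Pt n)) : ℝ≥0∞ :=
  sInf { e : ℝ≥0∞ | ∃ ε : ℝ, 0 ≤ ε ∧ e = ENNReal.ofReal ε ∧ IsMatching ε B C }

/-- A signed barcode: a pair (positive part, negative part) of barcodes. -/
abbrev SignedBarcode (n : ℕ) := Multiset (Pt n) × Multiset (Pt n)

/-- The bottleneck dissimilarity on signed barcodes. -/
def dBhat (B C : SignedBarcode n) : ℝ≥0∞ :=
  bottleneckDist (B.1 + C.2) (C.1 + B.2)

/-- Binary direct sum of persistence modules. -/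
def PersMod.dsum (M N : PersMod k n) : PersMod k n where
  X r := M.X r × N.X r
  map h := (M.map h).prodMap (N.map h)
  map_id r := by
    apply LinearMap.ext; intro x
    show (M.map (le_refl r) x.1, N.map (le_refl r) x.2) = x
    rw [M.map_id, N.map_id]; rfl
  map_comp {r s t} h₁ h₂ := by
    apply LinearMap.ext; intro x
    show (M.map h₂ (M.map h₁ x.1), N.map h₂ (N.map h₁ x.2))
        = (M.map (h₁.trans h₂) x.1, N.map (h₁.trans h₂) x.2)
    rw [← M.map_comp h₁ h₂, ← N.map_comp h₁ h₂]; rfl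

/-- Finite direct sum of persistence modules. -/
def dsumFin {m : ℕ} (P : Fin m → PersMod k n) : PersMod k n where
  X r := ∀ j, (P j).X r
  map h := LinearMap.pi fun j => ((P j).map h).comp (LinearMap.proj j)
  map_id r := by
    apply LinearMap.ext; intro x; funext j
    show (P j).map (le_refl r) (x j) = x j
    rw [(P j).map_id]; rfl
  map_comp {r s t} h₁ h₂ := by
    apply LinearMap.ext; intro x; funext j
    show (P j).map h₂ ((P j).map h₁ (x j)) = (P j).map (h₁.trans h₂) (x j)
    rw [← (P j).map_comp h₁ h₂]; rfl

/-- The zero persistence module. -/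
def zeroMod : PersMod k n := freeModFin (fun i : Fin 0 => i.elim0)

/-- The Hilbert function of a persistence module. -/
def Hil (M : PersMod k n) (r : Pt n) : ℕ := Module.finrank k (M.X r)

/-- Number of points of `B` (with multiplicity) that are `≤ r`. -/
def countLe (B : Multiset (Pt n)) (r : Pt n) : ℕ := Multiset.card (B.filter (fun i => i ≤ r))

/-- `R` is a free resolution of `M` with barcodes `B j`. -/
def IsFreeRes {M : PersMod k n} (R : Res M) (B : ℕ → Multiset (Pt n)) : Prop :=
  ∀ j, IsFreeWith (R.P j) (B j)

/-- `R` is a minimal free resolution of `M` with barcodes `B j`: in every homological degree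
its term has minimal rank among all free resolutions of `M`. -/
def IsMinFreeRes {M : PersMod k n} (R : Res M) (B : ℕ → Multiset (Pt n)) : Prop :=
  IsFreeRes R B ∧
  ∀ (R' : Res M) (B' : ℕ → Multiset (Pt n)), IsFreeRes R' B' →
    ∀ j, Multiset.card (B j) ≤ Multiset.card (B' j)

/-- Multiset union of the `B j` over even `j ≤ ℓ`. -/
def evenPart (B : ℕ → Multiset (Pt n)) (ℓ : ℕ) : Multiset (Pt n) :=
  ∑ j ∈ Finset.range (ℓ + 1), if Even j then B j else 0

/-- Multiset union of the `B j` over odd `j ≤ ℓ`. -/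
def oddPart (B : ℕ → Multiset (Pt n)) (ℓ : ℕ) : Multiset (Pt n) :=
  ∑ j ∈ Finset.range (ℓ + 1), if ¬ Even j then B j else 0

/-- `S` is the Betti signed barcode of `M`: the pair (even Betti numbers, odd Betti numbers)
coming from a minimal free resolution of `M`. -/
def IsBettiOf (M : PersMod k n) (S : SignedBarcode n) : Prop :=
  ∃ (R : Res M) (B : ℕ → Multiset (Pt n)), IsMinFreeRes R B ∧
    S = (evenPart B R.len, oddPart B R.len)

/-- `(P, Q)` (with barcodes `BP`, `BQ`) is a minimal Hilbert decomposition of `η`. -/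
def IsMinHilbDecomp (η : Pt n → ℤ) (P Q : PersMod k n) (BP BQ : Multiset (Pt n)) : Prop :=
  IsFreeWith P BP ∧ IsFreeWith Q BQ ∧
  (∀ r, η r = (Hil P r : ℤ) - (Hil Q r : ℤ)) ∧
  ∀ x : Pt n, ¬ (x ∈ BP ∧ x ∈ BQ)

/-- The `ℓ¹`-distance on `R^n`. -/
def l1dist (x y : Pt n) : ℝ := ∑ i, |x i - y i|

/-- The 1-Wasserstein cost of a matching (encoded as a multiset of pairs). -/
def matchCost (m : Multiset (Pt n × Pt n)) : ℝ := (m.map fun p => l1dist p.1 p.2).sum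

/-- The 1-Wasserstein distance between barcodes. -/
def wassDist (B C : Multiset (Pt n)) : ℝ≥0∞ :=
  sInf { e : ℝ≥0∞ | ∃ m : Multiset (Pt n × Pt n),
    m.map Prod.fst = B ∧ m.map Prod.snd = C ∧ e = ENNReal.ofReal (matchCost m) }

/-- The signed 1-Wasserstein distance on signed barcodes. -/
def dW1hat (B C : SignedBarcode n) : ℝ≥0∞ := wassDist (B.1 + C.2) (C.1 + B.2)

/-- The reduction of a signed barcode: cancel common points with multiplicity. -/
def reduceSB (B : SignedBarcode n) : SignedBarcode n := (B.1 - B.2, B.2 - B.1)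

/-! ### Auxiliary material for persistent Schanuel's lemma -/

lemma PersHom.nat_apply {M N : PersMod k n} (f : PersHom M N) {r s : Pt n} (h : r ≤ s)
    (x : M.X r) : N.map h (f.app r x) = f.app s (M.map h x) :=
  LinearMap.congr_fun (f.natural h) x

lemma PersMod.map_map' (M : PersMod k n) {r s t : Pt n} (h₁ : r ≤ s) (h₂ : s ≤ t) (x : M.X r) :
    M.map h₂ (M.map h₁ x) = M.map (h₁.trans h₂) x :=
  LinearMap.congr_fun (M.map_comp h₁ h₂) x

/-- Composition of morphisms of persistence modules. -/
def PersHom.comp' {A B C : PersMod k n} (g : PersHom B C) (f : PersHom A B) : PersHom A C where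
  app r := (g.app r).comp (f.app r)
  natural {r s} h := by
    apply LinearMap.ext; intro x
    simp only [LinearMap.comp_apply]
    rw [g.nat_apply, f.nat_apply]

/-- The `ε`-shift of a morphism of persistence modules. -/
def PersHom.sh {A B : PersMod k n} (f : PersHom A B) (ε : ℝ) :
    PersHom (A.shift ε) (B.shift ε) where
  app r := f.app (shiftPt ε r)
  natural {r s} h := f.natural (shiftPt_mono h)

/-- Factorization of a morphism through a pointwise-injective morphism whose
range contains its range. -/
lemma persFactor {A K P : PersMod k n} (i : PersHom K P)
    (hi : ∀ r, Function.Injective (i.app r)) (h : PersHom A P)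
    (hr : ∀ r (x : A.X r), h.app r x ∈ LinearMap.range (i.app r)) :
    ∃ δ : PersHom A K, ∀ r (x : A.X r), i.app r (δ.app r x) = h.app r x := by
  let e : ∀ r, K.X r ≃ₗ[k] LinearMap.range (i.app r) :=
    fun r => LinearEquiv.ofInjective (i.app r) (hi r)
  have key : ∀ r (y : LinearMap.range (i.app r)), i.app r ((e r).symm y) = (y : P.X r) := by
    intro r y
    have h1 : ((e r) ((e r).symm y) : P.X r) = i.app r ((e r).symm y) :=
      LinearEquiv.ofInjective_apply (i.app r) ((e r).symm y)
    rw [← h1, (e r).apply_symm_apply y]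
  set F : ∀ r, A.X r →ₗ[k] K.X r := fun r =>
    (e r).symm.toLinearMap.comp
      (LinearMap.codRestrict (LinearMap.range (i.app r)) (h.app r) (hr r)) with hF
  have keyF : ∀ r (x : A.X r), i.app r (F r x) = h.app r x := fun r x =>
    key r ⟨h.app r x, hr r x⟩
  refine ⟨⟨F, ?_⟩, keyF⟩
  intro r s hle
  apply LinearMap.ext; intro x
  apply hi s
  simp only [LinearMap.comp_apply]
  calc i.app s (K.map hle (F r x)) = P.map hle (i.app r (F r x)) := (i.nat_apply hle _).symm
    _ = P.map hle (h.app r x) := by rw [keyF]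
    _ = h.app s (A.map hle x) := h.nat_apply hle x
    _ = i.app s (F s (A.map hle x)) := (keyF s _).symm

/-- **Lemma 3.1** (persistent Schanuel's lemma).
Given short exact sequences `0 → K → P → M → 0` and `0 → L → Q → N → 0` with `P`, `Q`
projective, if `M` and `N` are `ε`-interleaved then so are `P ⊕ L[ε]` and `K[ε] ⊕ Q`. -/
theorem persistent_schanuel
    {k : Type} [Field k] {n : ℕ} (ε : ℝ)
    (M N K L P Q : PersMod k n)
    (i : PersHom K P) (p : PersHom P M) (j : PersHom L Q) (q : PersHom Q N)
    (hi : ∀ r, Function.Injective (i.app r)) (hp : ∀ r, Function.Surjective (p.app r))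
    (hip : ∀ r, LinearMap.range (i.app r) = LinearMap.ker (p.app r))
    (hj : ∀ r, Function.Injective (j.app r)) (hq : ∀ r, Function.Surjective (q.app r))
    (hjq : ∀ r, LinearMap.range (j.app r) = LinearMap.ker (q.app r))
    (hP : IsProjectiveMod P) (hQ : IsProjectiveMod Q)
    (hMN : Interleaved ε M N) :
    Interleaved ε (P.dsum (L.shift ε)) ((K.shift ε).dsum Q) := by
  obtain ⟨hε, f, g, hgf, hfg⟩ := hMN
  have l1 : ∀ r : Pt n, r ≤ shiftPt ε r := le_shiftPt hε
  have l2 : ∀ r : Pt n, r ≤ shiftPt ε (shiftPt ε r) := fun r => (l1 r).trans (l1 _)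
  have hgf' : ∀ r (x : M.X r), g.app (shiftPt ε r) (f.app r x) = M.map (l2 r) x :=
    fun r x => LinearMap.congr_fun (hgf r) x
  have hfg' : ∀ r (x : N.X r), f.app (shiftPt ε r) (g.app r x) = N.map (l2 r) x :=
    fun r x => LinearMap.congr_fun (hfg r) x
  -- p ∘ i = 0 and q ∘ j = 0
  have hpi : ∀ r (u : K.X r), p.app r (i.app r u) = 0 := by
    intro r u
    have : i.app r u ∈ LinearMap.ker (p.app r) := by rw [← hip r]; exact ⟨u, rfl⟩
    exact LinearMap.mem_ker.mp this
  have hqj : ∀ r (y : L.X r), q.app r (j.app r y) = 0 := by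
    intro r y
    have : j.app r y ∈ LinearMap.ker (q.app r) := by rw [← hjq r]; exact ⟨y, rfl⟩
    exact LinearMap.mem_ker.mp this
  have memK : ∀ r (y : P.X r), p.app r y = 0 → y ∈ LinearMap.range (i.app r) := by
    intro r y hy; rw [hip r]; exact LinearMap.mem_ker.mpr hy
  have memL : ∀ r (y : Q.X r), q.app r y = 0 → y ∈ LinearMap.range (j.app r) := by
    intro r y hy; rw [hjq r]; exact LinearMap.mem_ker.mpr hy
  -- lift f∘p through q[ε], and repackage with base-module types
  obtain ⟨α₀, hα₀⟩ := hP (Q.shift ε) (N.shift ε) (q.sh ε) (fun r => hq _) (f.comp' p)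
  obtain ⟨αa, αnat, hα'⟩ :
      ∃ a : ∀ r, P.X r →ₗ[k] Q.X (shiftPt ε r),
        (∀ (r s : Pt n) (h : r ≤ s) (x : P.X r),
          Q.map (shiftPt_mono h) (a r x) = a s (P.map h x)) ∧
        (∀ r (x : P.X r), q.app (shiftPt ε r) (a r x) = f.app r (p.app r x)) :=
    ⟨fun r => α₀.app r, fun r s h x => α₀.nat_apply h x,
      fun r x => LinearMap.congr_fun (hα₀ r) x⟩
  -- lift g∘q through p[ε], and repackage
  obtain ⟨β₀, hβ₀⟩ := hQ (P.shift ε) (M.shift ε) (p.sh ε) (fun r => hp _) (g.comp' q)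
  obtain ⟨βa, βnat, hβ'⟩ :
      ∃ b : ∀ r, Q.X r →ₗ[k] P.X (shiftPt ε r),
        (∀ (r s : Pt n) (h : r ≤ s) (x : Q.X r),
          P.map (shiftPt_mono h) (b r x) = b s (Q.map h x)) ∧
        (∀ r (x : Q.X r), p.app (shiftPt ε r) (b r x) = g.app r (q.app r x)) :=
    ⟨fun r => β₀.app r, fun r s h x => β₀.nat_apply h x,
      fun r x => LinearMap.congr_fun (hβ₀ r) x⟩
  -- the defect ι_P^{2ε} - β[ε]∘α : P → P[2ε]
  have Dnat : ∀ {r s : Pt n} (hle : r ≤ s),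
      ((((P.shift ε).shift ε)).map hle).comp
          (P.map (l2 r) - (βa (shiftPt ε r)).comp (αa r))
        = (P.map (l2 s) - (βa (shiftPt ε s)).comp (αa s)).comp (P.map hle) := by
    intro r s hle
    apply LinearMap.ext; intro x
    show P.map (shiftPt_mono (shiftPt_mono hle))
        (P.map (l2 r) x - βa (shiftPt ε r) (αa r x))
      = P.map (l2 s) (P.map hle x) - βa (shiftPt ε s) (αa s (P.map hle x))
    have e1 : P.map (shiftPt_mono (shiftPt_mono hle)) (βa (shiftPt ε r) (αa r x))
        = βa (shiftPt ε s) (αa s (P.map hle x)) :=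
      (βnat _ _ (shiftPt_mono hle) (αa r x)).trans
        (congrArg (βa (shiftPt ε s)) (αnat _ _ hle x))
    rw [map_sub, e1, P.map_map', P.map_map']
  obtain ⟨δ₀, hδ₀⟩ := persFactor ((i.sh ε).sh ε) (fun r => hi _)
    (⟨fun r => P.map (l2 r) - (βa (shiftPt ε r)).comp (αa r), Dnat⟩ :
      PersHom P ((P.shift ε).shift ε))
    (by
      intro r x
      refine memK (shiftPt ε (shiftPt ε r)) _ ?_
      show p.app _ (P.map (l2 r) x - βa (shiftPt ε r) (αa r x)) = 0
      have t1 : p.app (shiftPt ε (shiftPt ε r)) (P.map (l2 r) x)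
          = M.map (l2 r) (p.app r x) := (p.nat_apply (l2 r) x).symm
      have t2 : p.app (shiftPt ε (shiftPt ε r)) (βa (shiftPt ε r) (αa r x))
          = M.map (l2 r) (p.app r x) := by
        rw [hβ' (shiftPt ε r) (αa r x), hα' r x, hgf' r (p.app r x)]
      rw [map_sub, t1, t2, sub_self])
  obtain ⟨d, dnat, hδ'⟩ :
      ∃ d : ∀ r, P.X r →ₗ[k] K.X (shiftPt ε (shiftPt ε r)),
        (∀ (r s : Pt n) (h : r ≤ s) (x : P.X r),
          K.map (shiftPt_mono (shiftPt_mono h)) (d r x) = d s (P.map h x)) ∧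
        (∀ r (x : P.X r), i.app (shiftPt ε (shiftPt ε r)) (d r x)
          = P.map (l2 r) x - βa (shiftPt ε r) (αa r x)) :=
    ⟨fun r => δ₀.app r, fun r s h x => δ₀.nat_apply h x, fun r x => hδ₀ r x⟩
  -- the defect α[ε]∘β - ι_Q^{2ε} : Q → Q[2ε]
  have D'nat : ∀ {r s : Pt n} (hle : r ≤ s),
      ((((Q.shift ε).shift ε)).map hle).comp
          ((αa (shiftPt ε r)).comp (βa r) - Q.map (l2 r))
        = ((αa (shiftPt ε s)).comp (βa s) - Q.map (l2 s)).comp (Q.map hle) := by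
    intro r s hle
    apply LinearMap.ext; intro x
    show Q.map (shiftPt_mono (shiftPt_mono hle))
        (αa (shiftPt ε r) (βa r x) - Q.map (l2 r) x)
      = αa (shiftPt ε s) (βa s (Q.map hle x)) - Q.map (l2 s) (Q.map hle x)
    have e1 : Q.map (shiftPt_mono (shiftPt_mono hle)) (αa (shiftPt ε r) (βa r x))
        = αa (shiftPt ε s) (βa s (Q.map hle x)) :=
      (αnat _ _ (shiftPt_mono hle) (βa r x)).trans
        (congrArg (αa (shiftPt ε s)) (βnat _ _ hle x))
    rw [map_sub, e1, Q.map_map', Q.map_map']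
  obtain ⟨γ₀, hγ₀⟩ := persFactor ((j.sh ε).sh ε) (fun r => hj _)
    (⟨fun r => (αa (shiftPt ε r)).comp (βa r) - Q.map (l2 r), D'nat⟩ :
      PersHom Q ((Q.shift ε).shift ε))
    (by
      intro r v
      refine memL (shiftPt ε (shiftPt ε r)) _ ?_
      show q.app _ (αa (shiftPt ε r) (βa r v) - Q.map (l2 r) v) = 0
      have t1 : q.app (shiftPt ε (shiftPt ε r)) (αa (shiftPt ε r) (βa r v))
          = N.map (l2 r) (q.app r v) := by
        rw [hα' (shiftPt ε r) (βa r v), hβ' r v, hfg' r (q.app r v)]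
      have t2 : q.app (shiftPt ε (shiftPt ε r)) (Q.map (l2 r) v)
          = N.map (l2 r) (q.app r v) := (q.nat_apply (l2 r) v).symm
      rw [map_sub, t1, t2, sub_self])
  obtain ⟨c, cnat, hγ'⟩ :
      ∃ c : ∀ r, Q.X r →ₗ[k] L.X (shiftPt ε (shiftPt ε r)),
        (∀ (r s : Pt n) (h : r ≤ s) (v : Q.X r),
          L.map (shiftPt_mono (shiftPt_mono h)) (c r v) = c s (Q.map h v)) ∧
        (∀ r (v : Q.X r), j.app (shiftPt ε (shiftPt ε r)) (c r v)
          = αa (shiftPt ε r) (βa r v) - Q.map (l2 r) v) :=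
    ⟨fun r => γ₀.app r, fun r s h v => γ₀.nat_apply h v, fun r v => hγ₀ r v⟩
  -- κ : K → L[ε] with j[ε]∘κ = α∘i
  have κnat : ∀ {r s : Pt n} (hle : r ≤ s),
      (((Q.shift ε)).map hle).comp ((αa r).comp (i.app r))
        = ((αa s).comp (i.app s)).comp (K.map hle) := by
    intro r s hle
    apply LinearMap.ext; intro u
    show Q.map (shiftPt_mono hle) (αa r (i.app r u)) = αa s (i.app s (K.map hle u))
    exact (αnat _ _ hle (i.app r u)).trans
      (congrArg (αa s) (i.nat_apply hle u))
  obtain ⟨κ₀, hκ₀⟩ := persFactor (j.sh ε) (fun r => hj _)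
    (⟨fun r => (αa r).comp (i.app r), κnat⟩ : PersHom K (Q.shift ε))
    (by
      intro r u
      refine memL (shiftPt ε r) _ ?_
      show q.app _ (αa r (i.app r u)) = 0
      rw [hα' r (i.app r u), hpi r u, map_zero]; rfl)
  obtain ⟨kk, knat, hκ'⟩ :
      ∃ kk : ∀ r, K.X r →ₗ[k] L.X (shiftPt ε r),
        (∀ (r s : Pt n) (h : r ≤ s) (u : K.X r),
          L.map (shiftPt_mono h) (kk r u) = kk s (K.map h u)) ∧
        (∀ r (u : K.X r), j.app (shiftPt ε r) (kk r u) = αa r (i.app r u)) :=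
    ⟨fun r => κ₀.app r, fun r s h u => κ₀.nat_apply h u, fun r u => hκ₀ r u⟩
  -- λ : L → K[ε] with i[ε]∘λ = β∘j
  have lamnat : ∀ {r s : Pt n} (hle : r ≤ s),
      (((P.shift ε)).map hle).comp ((βa r).comp (j.app r))
        = ((βa s).comp (j.app s)).comp (L.map hle) := by
    intro r s hle
    apply LinearMap.ext; intro y
    show P.map (shiftPt_mono hle) (βa r (j.app r y)) = βa s (j.app s (L.map hle y))
    exact (βnat _ _ hle (j.app r y)).trans
      (congrArg (βa s) (j.nat_apply hle y))
  obtain ⟨lam₀, hlam₀⟩ := persFactor (i.sh ε) (fun r => hi _)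
    (⟨fun r => (βa r).comp (j.app r), lamnat⟩ : PersHom L (P.shift ε))
    (by
      intro r y
      refine memK (shiftPt ε r) _ ?_
      show p.app _ (βa r (j.app r y)) = 0
      rw [hβ' r (j.app r y), hqj r y, map_zero]; rfl)
  obtain ⟨ll, lnat, hlam'⟩ :
      ∃ ll : ∀ r, L.X r →ₗ[k] K.X (shiftPt ε r),
        (∀ (r s : Pt n) (h : r ≤ s) (y : L.X r),
          K.map (shiftPt_mono h) (ll r y) = ll s (L.map h y)) ∧
        (∀ r (y : L.X r), i.app (shiftPt ε r) (ll r y) = βa r (j.app r y)) :=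
    ⟨fun r => lam₀.app r, fun r s h y => lam₀.nat_apply h y, fun r y => hlam₀ r y⟩
  -- derived identities
  have hD1 : ∀ r (x : P.X r),
      kk (shiftPt ε (shiftPt ε r)) (d r x) + c (shiftPt ε r) (αa r x) = 0 := by
    intro r x
    apply hj (shiftPt ε (shiftPt ε (shiftPt ε r)))
    rw [map_add, map_zero, hκ' (shiftPt ε (shiftPt ε r)) (d r x),
      hγ' (shiftPt ε r) (αa r x), hδ' r x, map_sub]
    have e : αa (shiftPt ε (shiftPt ε r)) (P.map (l2 r) x)
        = Q.map (l2 (shiftPt ε r)) (αa r x) := (αnat _ _ (l2 r) x).symm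
    rw [e]; abel
  have hD2 : ∀ r (y : L.X r),
      kk (shiftPt ε r) (ll r y) = L.map (l2 r) y + c r (j.app r y) := by
    intro r y
    apply hj (shiftPt ε (shiftPt ε r))
    rw [hκ' (shiftPt ε r) (ll r y), hlam' r y, map_add, hγ' r (j.app r y)]
    have e : j.app (shiftPt ε (shiftPt ε r)) (L.map (l2 r) y)
        = Q.map (l2 r) (j.app r y) := (j.nat_apply (l2 r) y).symm
    rw [e]; abel
  have hD3 : ∀ r (u : K.X r),
      d r (i.app r u) + ll (shiftPt ε r) (kk r u) = K.map (l2 r) u := by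
    intro r u
    apply hi (shiftPt ε (shiftPt ε r))
    rw [map_add, hδ' r (i.app r u), hlam' (shiftPt ε r) (kk r u), hκ' r u]
    have e : i.app (shiftPt ε (shiftPt ε r)) (K.map (l2 r) u)
        = P.map (l2 r) (i.app r u) := (i.nat_apply (l2 r) u).symm
    rw [e]; abel
  have hD4 : ∀ r (v : Q.X r),
      d (shiftPt ε r) (βa r v) + ll (shiftPt ε (shiftPt ε r)) (c r v) = 0 := by
    intro r v
    apply hi (shiftPt ε (shiftPt ε (shiftPt ε r)))
    rw [map_add, map_zero, hδ' (shiftPt ε r) (βa r v),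
      hlam' (shiftPt ε (shiftPt ε r)) (c r v), hγ' r v, map_sub]
    have e : P.map (l2 (shiftPt ε r)) (βa r v)
        = βa (shiftPt ε (shiftPt ε r)) (Q.map (l2 r) v) := βnat _ _ (l2 r) v
    rw [e]; abel
  -- assemble the interleaving maps
  refine ⟨hε,
    ⟨fun r => LinearMap.prod
        ((d r).comp (LinearMap.fst k (P.X r) (L.X (shiftPt ε r)))
          + (ll (shiftPt ε r)).comp (LinearMap.snd k (P.X r) (L.X (shiftPt ε r))))
        ((αa r).comp (LinearMap.fst k (P.X r) (L.X (shiftPt ε r)))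
          - (j.app (shiftPt ε r)).comp (LinearMap.snd k (P.X r) (L.X (shiftPt ε r)))), ?_⟩,
    ⟨fun r => LinearMap.prod
        ((i.app (shiftPt ε r)).comp (LinearMap.fst k (K.X (shiftPt ε r)) (Q.X r))
          + (βa r).comp (LinearMap.snd k (K.X (shiftPt ε r)) (Q.X r)))
        ((kk (shiftPt ε r)).comp (LinearMap.fst k (K.X (shiftPt ε r)) (Q.X r))
          + (c r).comp (LinearMap.snd k (K.X (shiftPt ε r)) (Q.X r))), ?_⟩,
    ?_, ?_⟩
  · -- naturality of Φ
    intro r s hle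
    apply LinearMap.ext; intro x
    obtain ⟨a, b⟩ := x
    refine Prod.ext ?_ ?_
    · show K.map (shiftPt_mono (shiftPt_mono hle)) (d r a + ll (shiftPt ε r) b)
        = d s (P.map hle a) + ll (shiftPt ε s) (L.map (shiftPt_mono hle) b)
      rw [map_add]
      exact congrArg₂ (· + ·) (dnat _ _ hle a) (lnat _ _ (shiftPt_mono hle) b)
    · show Q.map (shiftPt_mono hle) (αa r a - j.app (shiftPt ε r) b)
        = αa s (P.map hle a) - j.app (shiftPt ε s) (L.map (shiftPt_mono hle) b)
      rw [map_sub]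
      exact congrArg₂ (· - ·) (αnat _ _ hle a) (j.nat_apply (shiftPt_mono hle) b)
  · -- naturality of Ψ
    intro r s hle
    apply LinearMap.ext; intro x
    obtain ⟨u, v⟩ := x
    refine Prod.ext ?_ ?_
    · show P.map (shiftPt_mono hle) (i.app (shiftPt ε r) u + βa r v)
        = i.app (shiftPt ε s) (K.map (shiftPt_mono hle) u) + βa s (Q.map hle v)
      rw [map_add]
      exact congrArg₂ (· + ·) (i.nat_apply (shiftPt_mono hle) u) (βnat _ _ hle v)
    · show L.map (shiftPt_mono (shiftPt_mono hle)) (kk (shiftPt ε r) u + c r v)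
        = kk (shiftPt ε s) (K.map (shiftPt_mono hle) u) + c s (Q.map hle v)
      rw [map_add]
      exact congrArg₂ (· + ·) (knat _ _ (shiftPt_mono hle) u) (cnat _ _ hle v)
  · -- Ψ[ε] ∘ Φ = ι
    intro r
    apply LinearMap.ext; intro x
    obtain ⟨a, b⟩ := x
    refine Prod.ext ?_ ?_
    · show i.app (shiftPt ε (shiftPt ε r)) (d r a + ll (shiftPt ε r) b)
          + βa (shiftPt ε r) (αa r a - j.app (shiftPt ε r) b)
        = P.map (l2 r) a
      rw [map_add, map_sub, hδ' r a, hlam' (shiftPt ε r) b]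
      abel
    · show kk (shiftPt ε (shiftPt ε r)) (d r a + ll (shiftPt ε r) b)
          + c (shiftPt ε r) (αa r a - j.app (shiftPt ε r) b)
        = L.map (l2 (shiftPt ε r)) b
      rw [map_add, map_sub, hD2 (shiftPt ε r) b]
      have e1 : kk (shiftPt ε (shiftPt ε r)) (d r a)
          = - c (shiftPt ε r) (αa r a) :=
        eq_neg_of_add_eq_zero_left (hD1 r a)
      rw [e1]; abel
  · -- Φ[ε] ∘ Ψ = ι
    intro r
    apply LinearMap.ext; intro x
    obtain ⟨u, v⟩ := x
    refine Prod.ext ?_ ?_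
    · show d (shiftPt ε r) (i.app (shiftPt ε r) u + βa r v)
          + ll (shiftPt ε (shiftPt ε r)) (kk (shiftPt ε r) u + c r v)
        = K.map (l2 (shiftPt ε r)) u
      rw [map_add, map_add]
      have e4 : d (shiftPt ε r) (βa r v)
          = - ll (shiftPt ε (shiftPt ε r)) (c r v) :=
        eq_neg_of_add_eq_zero_left (hD4 r v)
      rw [e4, ← hD3 (shiftPt ε r) u]
      abel
    · show αa (shiftPt ε r) (i.app (shiftPt ε r) u + βa r v)
          - j.app (shiftPt ε (shiftPt ε r)) (kk (shiftPt ε r) u + c r v)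
        = Q.map (l2 r) v
      rw [map_add, map_add, hγ' r v, ← hκ' (shiftPt ε r) u]
      abel

end
end

section
/- Triangle inequality for the signed 1-Wasserstein distance (Proposition 6.2(2)). For all finite n-dimensional signed barcodes B, C, and D, one has d̂_{W¹}(B, D) ≤ d̂_{W¹}(B, C) + d̂_{W¹}(C, D). -/
set_option linter.unusedVariables false
set_option maxHeartbeats 800000

open scoped Classical ENNReal

noncomputable section

variable {k : Type} [Field k] {n : ℕ}

lemma l1dist_nonneg (x y : Pt n) : 0 ≤ l1dist x y :=
  Finset.sum_nonneg fun i _ => abs_nonneg _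

lemma l1dist_triangle (x y z : Pt n) : l1dist x z ≤ l1dist x y + l1dist y z := by
  rw [l1dist, l1dist, l1dist, ← Finset.sum_add_distrib]
  refine Finset.sum_le_sum fun i _ => ?_
  have : x i - z i = (x i - y i) + (y i - z i) := by ring
  rw [this]; exact abs_add_le _ _

lemma matchCost_nonneg (m : Multiset (Pt n × Pt n)) : 0 ≤ matchCost m := by
  refine Multiset.sum_nonneg ?_
  intro x hx
  obtain ⟨p, _, rfl⟩ := Multiset.mem_map.1 hx
  exact l1dist_nonneg _ _

lemma matchCost_cons (p : Pt n × Pt n) (m : Multiset (Pt n × Pt n)) :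
    matchCost (p ::ₘ m) = l1dist p.1 p.2 + matchCost m := by
  simp [matchCost]

/-- Cancel one common element from both sides of a matching. -/
lemma cancel_one (m : Multiset (Pt n × Pt n)) (X Y : Multiset (Pt n)) (s : Pt n)
    (hf : m.map Prod.fst = X + {s}) (hs : m.map Prod.snd = Y + {s}) :
    ∃ m' : Multiset (Pt n × Pt n),
      m'.map Prod.fst = X ∧ m'.map Prod.snd = Y ∧ matchCost m' ≤ matchCost m := by
  have hsmem : s ∈ m.map Prod.snd := by rw [hs]; simp
  obtain ⟨p, hpm, hp2⟩ := Multiset.mem_map.1 hsmem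
  set m₀ := m.erase p with hm₀
  have hcons : p ::ₘ m₀ = m := Multiset.cons_erase hpm
  have hf0 : m₀.map Prod.fst = (X + {s}).erase p.1 := by
    rw [← hf, ← hcons, Multiset.map_cons, Multiset.erase_cons_head]
  have hs0 : m₀.map Prod.snd = Y := by
    have : m₀.map Prod.snd = (Y + {s}).erase p.2 := by
      rw [← hs, ← hcons, Multiset.map_cons, Multiset.erase_cons_head]
    rw [this, hp2, add_comm, Multiset.singleton_add, Multiset.erase_cons_head]
  have hcostm : matchCost m = l1dist p.1 p.2 + matchCost m₀ := by
    rw [← hcons, matchCost_cons]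
  by_cases hps : p.1 = s
  · refine ⟨m₀, ?_, hs0, ?_⟩
    · rw [hf0, hps, add_comm, Multiset.singleton_add, Multiset.erase_cons_head]
    · rw [hcostm]; nlinarith [l1dist_nonneg p.1 p.2]
  · -- p.1 ≠ s : find a pair in m₀ with first coordinate s and reroute
    have hpX : p.1 ∈ X := by
      have : p.1 ∈ m.map Prod.fst := Multiset.mem_map_of_mem _ hpm
      rw [hf] at this
      rcases Multiset.mem_add.1 this with h | h
      · exact h
      · exact absurd (Multiset.mem_singleton.1 h) hps
    have hsmem0 : s ∈ m₀.map Prod.fst := by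
      rw [hf0]
      refine Multiset.mem_erase_of_ne (fun h => hps h.symm) |>.2 ?_
      simp
    obtain ⟨q, hqm, hq1⟩ := Multiset.mem_map.1 hsmem0
    set m₁ := m₀.erase q with hm₁
    have hcons1 : q ::ₘ m₁ = m₀ := Multiset.cons_erase hqm
    have hf1 : m₁.map Prod.fst = ((X + {s}).erase p.1).erase q.1 := by
      rw [← hf0, ← hcons1, Multiset.map_cons, Multiset.erase_cons_head]
    have hs1 : m₁.map Prod.snd = Y.erase q.2 := by
      rw [← hs0, ← hcons1, Multiset.map_cons, Multiset.erase_cons_head]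
    have hqY : q.2 ∈ Y := by
      have : q.2 ∈ m₀.map Prod.snd := Multiset.mem_map_of_mem _ hqm
      rwa [hs0] at this
    refine ⟨(p.1, q.2) ::ₘ m₁, ?_, ?_, ?_⟩
    · rw [Multiset.map_cons, hf1, hq1, Multiset.erase_comm, add_comm,
        Multiset.singleton_add, Multiset.erase_cons_head]
      exact Multiset.cons_erase hpX
    · rw [Multiset.map_cons, hs1]
      exact Multiset.cons_erase hqY
    · rw [matchCost_cons, hcostm, ← hcons1, matchCost_cons, hp2, hq1]
      have := l1dist_triangle p.1 s q.2
      simp only [] at *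
      linarith
  
/-- Cancel a common multiset from both sides of a matching. -/
lemma cancel_many (S : Multiset (Pt n)) :
    ∀ (m : Multiset (Pt n × Pt n)) (X Y : Multiset (Pt n)),
    m.map Prod.fst = X + S → m.map Prod.snd = Y + S →
    ∃ m' : Multiset (Pt n × Pt n),
      m'.map Prod.fst = X ∧ m'.map Prod.snd = Y ∧ matchCost m' ≤ matchCost m := by
  induction S using Multiset.induction_on with
  | empty =>
    intro m X Y hf hs
    exact ⟨m, by simpa using hf, by simpa using hs, le_refl _⟩
  | cons s S ih =>
    intro m X Y hf hs
    have hre : ∀ Z : Multiset (Pt n), Z + (s ::ₘ S) = (Z + S) + {s} := by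
      intro Z
      rw [← Multiset.singleton_add]
      exact add_left_comm Z {s} S ▸ (add_comm (Z + S) {s} ▸ by abel)
    rw [hre] at hf
    rw [hre] at hs
    obtain ⟨m₂, hf2, hs2, hc2⟩ := cancel_one m (X + S) (Y + S) s hf hs
    obtain ⟨m', hf', hs', hc'⟩ := ih m₂ X Y hf2 hs2
    exact ⟨m', hf', hs', hc'.trans hc2⟩

/-- **Proposition 6.2(2).** The signed 1-Wasserstein distance satisfies the triangle
inequality. -/
theorem dW1hat_triangle {n : ℕ} (B C D : SignedBarcode n) :
    dW1hat B D ≤ dW1hat B C + dW1hat C D := by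
  unfold dW1hat wassDist
  rw [ENNReal.sInf_add]
  refine le_iInf₂ fun e1 he1 => ?_
  rw [add_comm e1 _, ENNReal.sInf_add]
  refine le_iInf₂ fun e2 he2 => ?_
  obtain ⟨m1, hf1, hs1, rfl⟩ := he1
  obtain ⟨m2, hf2, hs2, rfl⟩ := he2
  -- combine the two matchings and cancel the common part C.1 + C.2
  have hF : (m1 + m2).map Prod.fst = (B.1 + D.2) + (C.1 + C.2) := by
    rw [Multiset.map_add, hf1, hf2]; abel
  have hS : (m1 + m2).map Prod.snd = (D.1 + B.2) + (C.1 + C.2) := by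
    rw [Multiset.map_add, hs1, hs2]; abel
  obtain ⟨m', hf', hs', hc'⟩ := cancel_many (C.1 + C.2) (m1 + m2) _ _ hF hS
  calc sInf {e : ℝ≥0∞ | ∃ m : Multiset (Pt n × Pt n),
        m.map Prod.fst = B.1 + D.2 ∧ m.map Prod.snd = D.1 + B.2 ∧
        e = ENNReal.ofReal (matchCost m)}
      ≤ ENNReal.ofReal (matchCost m') := sInf_le ⟨m', hf', hs', rfl⟩
    _ ≤ ENNReal.ofReal (matchCost (m1 + m2)) := ENNReal.ofReal_le_ofReal hc'
    _ = ENNReal.ofReal (matchCost m1 + matchCost m2) := by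
        congr 1; simp [matchCost]
    _ ≤ ENNReal.ofReal (matchCost m2) + ENNReal.ofReal (matchCost m1) := by
        rw [ENNReal.ofReal_add (matchCost_nonneg m1) (matchCost_nonneg m2)]
        rw [add_comm]


end
end
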